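/- arXiv:1412.8582 — 4 statements merged into one kernel-verified Lean document; each statement's English description precedes it below -/
import Mathlib

section
/- Let G be a group acting transitively on a set X, let φ : G → ℤ be a homomorphism with kernel K, and let x ∈ X. If φ(G_x) ≠ 0 and φ is surjective, then the number of K-orbits in X is finite and equals the index of φ(G_x) in ℤ. -/
lemma aux_finiteIndex (H : Subgroup (Multiplicative ℤ)) (hH : H ≠ ⊥) : H.FiniteIndex := by
  obtain ⟨a, ha⟩ := Int.subgroup_cyclic (Subgroup.toAddSubgroup H)
  have ha' : a ≠ 0 := by
    rintro rfl
    apply hH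
    have : Subgroup.toAddSubgroup H = ⊥ := by
      rw [ha]; simp [AddSubgroup.closure_singleton_zero]; rfl
    simpa using congrArg (Subgroup.toAddSubgroup (G := Multiplicative ℤ)).symm this
  refine ⟨?_⟩
  rw [← Subgroup.index_toAddSubgroup, ha, ← AddSubgroup.zmultiples_eq_closure]
  exact (Int.index_zmultiples a).trans_ne (by simpa using ha')

/-- If `G` acts transitively on `X`, `φ : G → ℤ` is a surjective homomorphism
with kernel `K`, and `φ` does not vanish on the stabilizer of `x`, then the
number of `K`-orbits in `X` is finite and equals the index of `φ(G_x)` in `ℤ`. -/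
theorem stmt_2 {G X : Type*} [Group G] [MulAction G X]
    (htrans : MulAction.IsPretransitive G X)
    (φ : G →* Multiplicative ℤ) (hsurj : Function.Surjective φ) (x : X)
    (hx : (MulAction.stabilizer G x).map φ ≠ ⊥) :
    Finite (MulAction.orbitRel.Quotient φ.ker X) ∧
      Nat.card (MulAction.orbitRel.Quotient φ.ker X) =
        ((MulAction.stabilizer G x).map φ).index := by
  set H := (MulAction.stabilizer G x).map φ with hH
  have hexists : ∀ y : X, ∃ g : G, g • x = y := fun y => htrans.exists_smul_eq x y
  choose σ hσ using hexists
  -- well-definedness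
  have hwd : ∀ y y' : X, MulAction.orbitRel φ.ker X y y' →
      (QuotientGroup.mk (φ (σ y)) : Multiplicative ℤ ⧸ H) = QuotientGroup.mk (φ (σ y')) := by
    intro y y' hyy'
    obtain ⟨k, hk⟩ := hyy'
    have hk' : (k : G) • y' = y := hk
    have hs : (σ y)⁻¹ * ((k : G) * σ y') ∈ MulAction.stabilizer G x := by
      rw [MulAction.mem_stabilizer_iff, mul_smul, mul_smul, hσ y', hk', inv_smul_eq_iff, hσ y]
    rw [QuotientGroup.eq]
    have hmem : φ ((σ y)⁻¹ * ((k : G) * σ y')) ∈ H := ⟨_, hs, rfl⟩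
    have hk1 : φ (k : G) = 1 := k.2
    simpa [map_mul, map_inv, hk1, mul_comm, mul_assoc, mul_left_comm] using hmem
  let f : MulAction.orbitRel.Quotient φ.ker X → Multiplicative ℤ ⧸ H :=
    Quotient.lift (fun y => QuotientGroup.mk (φ (σ y))) hwd
  have hbij : Function.Bijective f := by
    constructor
    · rintro ⟨y⟩ ⟨y'⟩ h
      have h' : (QuotientGroup.mk (φ (σ y)) : Multiplicative ℤ ⧸ H)
          = QuotientGroup.mk (φ (σ y')) := h
      rw [QuotientGroup.eq] at h'
      obtain ⟨s, hs, hφs⟩ := h'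
      have hk : φ (σ y * s * (σ y')⁻¹) = 1 := by
        have := hφs
        simp only [map_mul, map_inv]
        rw [hφs]
        group
      refine Quotient.sound ⟨⟨σ y * s * (σ y')⁻¹, hk⟩, ?_⟩
      show (σ y * s * (σ y')⁻¹) • y' = y
      have h1 : (σ y')⁻¹ • y' = x := by rw [inv_smul_eq_iff, hσ]
      rw [mul_smul, mul_smul, h1, MulAction.mem_stabilizer_iff.mp hs, hσ]
    · rintro ⟨z⟩
      obtain ⟨g, hg⟩ := hsurj z
      refine ⟨Quotient.mk _ (g • x), ?_⟩
      show (QuotientGroup.mk (φ (σ (g • x))) : Multiplicative ℤ ⧸ H) = QuotientGroup.mk z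
      rw [QuotientGroup.eq]
      have hs : g⁻¹ * σ (g • x) ∈ MulAction.stabilizer G x := by
        rw [MulAction.mem_stabilizer_iff, mul_smul, hσ, inv_smul_smul]
      have hmem : φ (g⁻¹ * σ (g • x)) ∈ H := ⟨_, hs, rfl⟩
      simpa [map_mul, map_inv, hg, mul_comm] using H.inv_mem hmem
  have e := Equiv.ofBijective f hbij
  have hfin : H.FiniteIndex := aux_finiteIndex H hx
  have : Finite (Multiplicative ℤ ⧸ H) := Subgroup.finite_quotient_of_finiteIndex
  refine ⟨Finite.of_equiv _ e.symm, ?_⟩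
  rw [Nat.card_congr e, Subgroup.index]
end

section
/- Let G = F_n × ℤ with F_n free on x_1,…,x_n and ℤ generated by z. Let p, q be coprime positive integers and define φ : G → ℤ by φ(x_i) = p for all i and φ(z) = q. Then φ is surjective, the projection G → F_n is injective on ker φ, and its image is the set of elements of F_n whose total exponent sum is divisible by q; consequently ker φ is free of rank q(n−1)+1. -/
namespace S9
open FreeGroup SemidirectProduct

variable (m q p : ℕ) [NeZero q]

abbrev B := FreeGroup ((ZMod q × Fin m) ⊕ Unit)

variable {m q}
set_option linter.unusedSectionVars false

def c : B m q := FreeGroup.of (Sum.inr ())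
def b (i : ZMod q) (j : Fin m) : B m q := FreeGroup.of (Sum.inl (i, j))

def x0 : FreeGroup (Fin (m + 1)) := FreeGroup.of 0

/-- the image of the basis of `B` in the free group -/
def fgen : (ZMod q × Fin m) ⊕ Unit → FreeGroup (Fin (m + 1))
  | Sum.inl (i, j) => x0 ^ (i.val : ℤ) * (FreeGroup.of j.succ * x0⁻¹) * x0 ^ (-(i.val : ℤ))
  | Sum.inr _ => x0 ^ (q : ℤ)

def f : B m q →* FreeGroup (Fin (m + 1)) := FreeGroup.lift fgen

@[simp] lemma f_b (i : ZMod q) (j : Fin m) :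
    f (b i j) = x0 ^ (i.val : ℤ) * (FreeGroup.of j.succ * x0⁻¹) * x0 ^ (-(i.val : ℤ)) :=
  FreeGroup.lift_apply_of

@[simp] lemma f_c : f (c : B m q) = (x0 ^ (q : ℤ) : FreeGroup (Fin (m+1))) :=
  FreeGroup.lift_apply_of

def βf : B m q →* B m q := FreeGroup.lift fun s =>
  match s with
  | Sum.inl (i, j) => if i + 1 = 0 then c * b 0 j * c⁻¹ else b (i + 1) j
  | Sum.inr _ => c

def βi : B m q →* B m q := FreeGroup.lift fun s =>
  match s with
  | Sum.inl (i, j) => if i = 0 then c⁻¹ * b (i - 1) j * c else b (i - 1) j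
  | Sum.inr _ => c

@[simp] lemma βf_b (i : ZMod q) (j : Fin m) :
    βf (b i j) = if i + 1 = 0 then c * b 0 j * c⁻¹ else b (i + 1) j := FreeGroup.lift_apply_of
@[simp] lemma βf_c : βf (c : B m q) = c := FreeGroup.lift_apply_of
@[simp] lemma βi_b (i : ZMod q) (j : Fin m) :
    βi (b i j) = if i = 0 then c⁻¹ * b (i - 1) j * c else b (i - 1) j := FreeGroup.lift_apply_of
@[simp] lemma βi_c : βi (c : B m q) = c := FreeGroup.lift_apply_of

lemma βiβf : (βi (m := m) (q := q)).comp βf = MonoidHom.id _ := by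
  apply FreeGroup.ext_hom
  rintro (⟨i, j⟩ | ⟨⟩) <;> simp only [MonoidHom.comp_apply, MonoidHom.id_apply]
  · show βi (βf (b i j)) = b i j
    by_cases h : i + 1 = 0
    · have hi : i = -1 := by linear_combination h
      rw [βf_b, if_pos h, _root_.map_mul, _root_.map_mul, _root_.map_inv, βi_c, βi_b, if_pos rfl,
        zero_sub, hi]
      group
    · rw [βf_b, if_neg h, βi_b, if_neg (fun h0 => absurd (by linear_combination h0) h),
        add_sub_cancel_right]
  · show βi (βf c) = c; simp

lemma βfβi : (βf (m := m) (q := q)).comp βi = MonoidHom.id _ := by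
  apply FreeGroup.ext_hom
  rintro (⟨i, j⟩ | ⟨⟩) <;> simp only [MonoidHom.comp_apply, MonoidHom.id_apply]
  · show βf (βi (b i j)) = b i j
    by_cases h : i = 0
    · rw [βi_b, if_pos h, _root_.map_mul, _root_.map_mul, _root_.map_inv, βf_c, βf_b,
        if_pos (by rw [sub_add_cancel]; exact h), h]
      group
    · rw [βi_b, if_neg h, βf_b, if_neg (by rw [sub_add_cancel]; exact h), sub_add_cancel]
  · show βf (βi c) = c; simp

def βe : B m q ≃* B m q := MonoidHom.toMulEquiv βf βi βiβf βfβi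

@[simp] lemma βe_apply (x : B m q) : βe x = βf x := rfl
@[simp] lemma βe_symm_apply (x : B m q) : βe.symm x = βi x := rfl

def θ : Multiplicative ℤ →* MulAut (B m q) := zpowersHom _ βe

def M (m q : ℕ) [NeZero q] := B m q ⋊[θ] Multiplicative ℤ

instance : Group (M m q) := SemidirectProduct.instGroup


lemma zmod_succ_eq_zero_iff (k : ℕ) : ((k : ZMod q) + 1 = 0) ↔ q ∣ (k + 1) := by
  rw [show ((k : ZMod q) + 1) = ((k + 1 : ℕ) : ZMod q) by push_cast; ring,
    ZMod.natCast_eq_zero_iff]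

/-- iterating the shift automorphism on `b 0 j` -/
lemma βe_pow_b (j : Fin m) : ∀ k : ℕ,
    (βe ^ k : MulAut (B m q)) (b 0 j) = c ^ (k / q) * b (k : ZMod q) j * (c ^ (k / q))⁻¹
  | 0 => by simp
  | (k + 1) => by
    have hc : ∀ t : ℕ, βe ((c : B m q) ^ t) = c ^ t := by
      intro t; rw [map_pow]; simp
    rw [pow_succ', MulAut.mul_apply, βe_pow_b j k, _root_.map_mul, _root_.map_mul,
      _root_.map_inv, hc, βe_apply, βf_b]
    by_cases h : (k : ZMod q) + 1 = 0
    · have hdvd : q ∣ k + 1 := (zmod_succ_eq_zero_iff k).1 h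
      rw [if_pos h, Nat.succ_div, if_pos hdvd]
      have : ((k + 1 : ℕ) : ZMod q) = 0 := by
        rwa [show ((k + 1 : ℕ) : ZMod q) = ((k : ZMod q) + 1) by push_cast; ring]
      rw [this, pow_succ]
      group
    · have hdvd : ¬ q ∣ k + 1 := fun hd => h ((zmod_succ_eq_zero_iff k).2 hd)
      rw [if_neg h, Nat.succ_div, if_neg hdvd]
      have : ((k + 1 : ℕ) : ZMod q) = (k : ZMod q) + 1 := by push_cast; ring
      rw [this, add_zero]

lemma βe_pow_c : ∀ k : ℕ, (βe ^ k : MulAut (B m q)) c = c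
  | 0 => by simp
  | (k + 1) => by rw [pow_succ', MulAut.mul_apply, βe_pow_c k]; simp

lemma βe_pow_b_small (i : ZMod q) (j : Fin m) :
    (βe ^ i.val : MulAut (B m q)) (b 0 j) = b i j := by
  rw [βe_pow_b, Nat.div_eq_of_lt (ZMod.val_lt i), pow_zero, ZMod.natCast_rightInverse i]
  group

/-- `βe ^ q` is conjugation by `c`. -/
lemma βe_pow_q (x : B m q) : (βe ^ q : MulAut (B m q)) x = c * x * c⁻¹ := by
  have := FreeGroup.ext_hom ((βe ^ q : MulAut (B m q)) : B m q ≃* B m q).toMonoidHom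
    ((MulAut.conj (c : B m q)).toMonoidHom) ?_
  · exact congrArg (fun F => F.toFun x) this
  rintro (⟨i, j⟩ | ⟨⟩)
  · show (βe ^ q : MulAut (B m q)) (b i j) = MulAut.conj c (b i j)
    have h1 : (βe ^ q : MulAut (B m q)) (b i j)
        = (βe ^ (q + i.val) : MulAut (B m q)) (b 0 j) := by
      rw [pow_add, MulAut.mul_apply, βe_pow_b_small]
    rw [h1, βe_pow_b]
    have h2 : (q + i.val) / q = 1 := by
      rw [Nat.add_div_left _ (NeZero.pos q), Nat.div_eq_of_lt (ZMod.val_lt i)]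
    have h3 : ((q + i.val : ℕ) : ZMod q) = i := by
      push_cast [ZMod.natCast_self, ZMod.natCast_rightInverse i]; ring
    rw [h2, h3, pow_one, MulAut.conj_apply]
  · show (βe ^ q : MulAut (B m q)) c = MulAut.conj c c
    rw [βe_pow_c, MulAut.conj_apply]; group

/-- conjugation compatibility of `f` with the shift -/
lemma f_comp_βf : (f (m := m) (q := q)).comp βf
    = (MulAut.conj (x0 : FreeGroup (Fin (m+1)))).toMonoidHom.comp f := by
  apply FreeGroup.ext_hom
  rintro (⟨i, j⟩ | ⟨⟩) <;>
    simp only [MonoidHom.comp_apply, MulEquiv.coe_toMonoidHom, MulAut.conj_apply]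
  · show f (βf (b i j)) = x0 * (f (b i j)) * x0⁻¹
    rw [βf_b, f_b]
    by_cases h : i + 1 = 0
    · have hd : q ∣ i.val + 1 := by
        refine (zmod_succ_eq_zero_iff i.val).1 ?_
        rwa [ZMod.natCast_rightInverse i]
      have hle : i.val + 1 ≤ q := ZMod.val_lt i
      have hvq : i.val + 1 = q := le_antisymm hle (Nat.le_of_dvd (Nat.succ_pos _) hd)
      have hval : ((i.val : ℤ) + 1) = (q : ℤ) := by omega
      rw [if_pos h, _root_.map_mul, _root_.map_mul, _root_.map_inv, f_c, f_b, ZMod.val_zero,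
        ← hval]
      group
    · have hlt : i.val + 1 < q := by
        by_cases h' : i.val + 1 < q
        · exact h'
        · exfalso
          apply h
          have hq : i.val + 1 = q := by have := ZMod.val_lt i; omega
          rw [← ZMod.natCast_rightInverse i, zmod_succ_eq_zero_iff, hq]
      have hval : (i + 1).val = i.val + 1 := by
        rw [show i + 1 = ((i.val + 1 : ℕ) : ZMod q) by
          push_cast [ZMod.natCast_rightInverse i]; ring]
        exact ZMod.val_cast_of_lt hlt
      rw [if_neg h, f_b, hval]
      push_cast
      group
  · show f (βf (c : B m q)) = x0 * (f (c : B m q)) * x0⁻¹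
    rw [βf_c, f_c]
    group

lemma f_βe (x : B m q) : f (βe x) = x0 * f x * x0⁻¹ :=
  congrArg (fun F => F.toFun x) f_comp_βf

lemma f_βe_symm (x : B m q) : f (βe.symm x) = x0⁻¹ * f x * x0 := by
  have := f_βe (m := m) (q := q) (βe.symm x)
  rw [MulEquiv.apply_symm_apply] at this
  rw [this]
  group

lemma f_βe_zpow (k : ℤ) : ∀ x : B m q,
    f ((βe ^ k : MulAut (B m q)) x) = x0 ^ k * f x * x0 ^ (-k) := by
  induction k using Int.induction_on with
  | zero => simp
  | succ t ih =>
      intro x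
      have h1 : (βe ^ ((t : ℤ) + 1) : MulAut (B m q)) x
          = (βe ^ (t : ℤ) : MulAut (B m q)) (βe x) := by
        rw [zpow_add_one, MulAut.mul_apply]
      rw [h1, ih (βe x), f_βe]
      group
  | pred t ih =>
      intro x
      have h1 : (βe ^ (-(t : ℤ) - 1) : MulAut (B m q)) x
          = (βe ^ (-(t : ℤ)) : MulAut (B m q)) (βe.symm x) := by
        rw [zpow_sub_one, MulAut.mul_apply]
        rfl
      rw [h1, ih (βe.symm x), f_βe_symm]
      group


def g0 : Multiplicative ℤ →* FreeGroup (Fin (m + 1)) := zpowersHom _ x0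

def Ψ : (B m q ⋊[θ] Multiplicative ℤ) →* FreeGroup (Fin (m + 1)) :=
  SemidirectProduct.lift f g0 (by
    intro k
    apply FreeGroup.ext_hom
    intro a
    simp only [MonoidHom.comp_apply, MulEquiv.coe_toMonoidHom, MulAut.conj_apply]
    show f ((θ k) (of a)) = g0 k * f (of a) * (g0 k)⁻¹
    have h1 : (θ k) (of a) = (βe ^ (Multiplicative.toAdd k) : MulAut (B m q)) (of a) := rfl
    have h2 : g0 (m := m) k = x0 ^ (Multiplicative.toAdd k) := rfl
    rw [h1, h2, f_βe_zpow]
    group)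

@[simp] lemma Ψ_mk (x : B m q) (k : Multiplicative ℤ) :
    Ψ ⟨x, k⟩ = f x * x0 ^ (Multiplicative.toAdd k) := rfl

@[simp] lemma Ψ_inl (x : B m q) : Ψ (inl x) = f x := SemidirectProduct.lift_inl _ _ _ x

@[simp] lemma Ψ_inr (k : Multiplicative ℤ) :
    Ψ (inr k : B m q ⋊[θ] Multiplicative ℤ) = x0 ^ (Multiplicative.toAdd k) :=
  SemidirectProduct.lift_inr _ _ _ k

def Φ : FreeGroup (Fin (m + 1)) →* (B m q ⋊[θ] Multiplicative ℤ) :=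
  FreeGroup.lift fun v =>
    Fin.cases (inr (Multiplicative.ofAdd (1 : ℤ)))
      (fun j => inl (b 0 j) * inr (Multiplicative.ofAdd (1 : ℤ))) v

@[simp] lemma Φ_x0 : Φ (x0 : FreeGroup (Fin (m+1))) = (inr (Multiplicative.ofAdd (1 : ℤ)) :
    B m q ⋊[θ] Multiplicative ℤ) := by
  show Φ (FreeGroup.of 0) = _
  rw [Φ, FreeGroup.lift_apply_of, Fin.cases_zero]

@[simp] lemma Φ_succ (j : Fin m) : Φ (FreeGroup.of j.succ)
    = (inl (b 0 j) * inr (Multiplicative.ofAdd (1 : ℤ)) : B m q ⋊[θ] Multiplicative ℤ) := by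
  rw [Φ, FreeGroup.lift_apply_of, Fin.cases_succ]

lemma ΨΦ : (Ψ (m := m) (q := q)).comp Φ = MonoidHom.id _ := by
  apply FreeGroup.ext_hom
  intro v
  simp only [MonoidHom.comp_apply, MonoidHom.id_apply]
  induction v using Fin.cases with
  | zero =>
      show Ψ (Φ (x0)) = x0
      rw [Φ_x0]
      simp
  | succ j =>
      rw [Φ_succ, _root_.map_mul, Ψ_inl, Ψ_inr]
      simp only [f_b, ZMod.val_zero, toAdd_ofAdd]
      group

/-- exponent-count of `c` -/
def δ' : B m q →* Multiplicative ℤ :=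
  FreeGroup.lift (Sum.elim (fun _ => (1 : Multiplicative ℤ)) fun _ => Multiplicative.ofAdd 1)

@[simp] lemma δ'_b (i : ZMod q) (j : Fin m) : δ' (b i j) = 1 := FreeGroup.lift_apply_of
@[simp] lemma δ'_c : δ' (c : B m q) = Multiplicative.ofAdd 1 := FreeGroup.lift_apply_of

lemma δ'_βf (x : B m q) : δ' (βf x) = δ' x := by
  have : (δ' (m := m) (q := q)).comp βf = δ' := by
    apply FreeGroup.ext_hom
    rintro (⟨i, j⟩ | ⟨⟩) <;> simp only [MonoidHom.comp_apply]
    · show δ' (βf (b i j)) = δ' (b i j)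
      rw [βf_b]
      by_cases h : i + 1 = 0 <;> simp [h]
    · show δ' (βf c) = δ' c
      simp
  exact congrArg (fun F => F.toFun x) this

lemma δ'_βe_symm (x : B m q) : δ' (βe.symm x) = δ' x := by
  conv_rhs => rw [show x = βe (βe.symm x) from (MulEquiv.apply_symm_apply βe x).symm]
  exact (δ'_βf _).symm

lemma δ'_βe_zpow (k : ℤ) : ∀ x : B m q, δ' ((βe ^ k : MulAut (B m q)) x) = δ' x := by
  induction k using Int.induction_on with
  | zero => intro x; simp
  | succ t ih =>
      intro x
      have h1 : (βe ^ ((t : ℤ) + 1) : MulAut (B m q)) x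
          = (βe ^ (t : ℤ) : MulAut (B m q)) (βe x) := by
        rw [zpow_add_one, MulAut.mul_apply]
      rw [h1, ih (βe x)]
      exact δ'_βf x
  | pred t ih =>
      intro x
      have h1 : (βe ^ (-(t : ℤ) - 1) : MulAut (B m q)) x
          = (βe ^ (-(t : ℤ)) : MulAut (B m q)) (βe.symm x) := by
        rw [zpow_sub_one, MulAut.mul_apply]
        rfl
      rw [h1, ih (βe.symm x), δ'_βe_symm]

def D : (B m q ⋊[θ] Multiplicative ℤ) →* Multiplicative ℤ :=
  SemidirectProduct.lift δ' 1 (by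
    intro k
    apply FreeGroup.ext_hom
    intro a
    simp only [MonoidHom.comp_apply, MulEquiv.coe_toMonoidHom, MulAut.conj_apply,
      MonoidHom.one_apply, mul_one, one_mul, inv_one]
    show δ' ((θ k) (of a)) = δ' (of a)
    exact δ'_βe_zpow (Multiplicative.toAdd k) (of a))

@[simp] lemma D_mk (x : B m q) (k : Multiplicative ℤ) : D ⟨x, k⟩ = δ' x := by
  show δ' x * (1 : Multiplicative ℤ →* Multiplicative ℤ) k = δ' x
  simp

@[simp] lemma D_inl (x : B m q) : D (inl x) = δ' x := SemidirectProduct.lift_inl _ _ _ x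

@[simp] lemma D_inr (k : Multiplicative ℤ) : D (inr k : B m q ⋊[θ] Multiplicative ℤ) = 1 :=
  SemidirectProduct.lift_inr _ _ _ k

lemma D_Φ (w : FreeGroup (Fin (m + 1))) : D (Φ (q := q) w) = 1 := by
  have : (D (m := m) (q := q)).comp Φ = 1 := by
    apply FreeGroup.ext_hom
    intro v
    simp only [MonoidHom.comp_apply, MonoidHom.one_apply]
    induction v using Fin.cases with
    | zero =>
        show D (Φ x0) = 1
        rw [Φ_x0, D_inr]
    | succ j =>
        rw [Φ_succ, _root_.map_mul, D_inl, D_inr]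
        simp
  exact congrArg (fun F => F.toFun w) this

def z : B m q ⋊[θ] Multiplicative ℤ := inl (c⁻¹) * inr (Multiplicative.ofAdd (q : ℤ))

lemma θ_q (x : B m q) : θ (Multiplicative.ofAdd (q : ℤ)) x = c * x * c⁻¹ := by
  show (βe ^ ((q : ℤ)) : MulAut (B m q)) x = c * x * c⁻¹
  rw [show ((q : ℤ)) = ((q : ℕ) : ℤ) from rfl, zpow_natCast]
  exact βe_pow_q x

lemma z_comm (x : B m q) : z * inl x = inl x * z := by
  have h : (inr (Multiplicative.ofAdd (q : ℤ)) : B m q ⋊[θ] Multiplicative ℤ) * inl x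
      = inl (c * x * c⁻¹) * inr (Multiplicative.ofAdd (q : ℤ)) := by
    rw [← θ_q, inl_aut, _root_.map_inv]
    group
  rw [z, mul_assoc, h, ← mul_assoc, ← _root_.map_mul,
    show c⁻¹ * (c * x * c⁻¹) = x * c⁻¹ by group, _root_.map_mul, mul_assoc]

lemma z_comm' (k : ℤ) (x : B m q) : z ^ k * inl x = inl x * z ^ k := by
  have hc : Commute z (inl x : B m q ⋊[θ] Multiplicative ℤ) := z_comm x
  exact (hc.zpow_left k).eq

def κ : B m q →* (B m q ⋊[θ] Multiplicative ℤ) where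
  toFun x := inl x * z ^ (Multiplicative.toAdd (δ' x))
  map_one' := by simp
  map_mul' x y := by
    simp only [_root_.map_mul, toAdd_mul, zpow_add]
    rw [mul_assoc (inl x) (z ^ Multiplicative.toAdd (δ' x)),
      ← mul_assoc (z ^ Multiplicative.toAdd (δ' x)) (inl y), z_comm']
    simp [mul_assoc]


@[simp] lemma κ_apply (x : B m q) : κ x = inl x * z ^ (Multiplicative.toAdd (δ' x)) := rfl

lemma inr_pow (t : ℤ) : (inr (Multiplicative.ofAdd (1 : ℤ)) : B m q ⋊[θ] Multiplicative ℤ) ^ t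
    = inr (Multiplicative.ofAdd t) := by
  rw [← map_zpow]
  congr 1
  rw [← ofAdd_zsmul, smul_eq_mul, mul_one]

lemma Φ_comp_f : (Φ (m := m)).comp (f (m := m) (q := q)) = κ := by
  apply FreeGroup.ext_hom
  rintro (⟨i, j⟩ | ⟨⟩) <;> simp only [MonoidHom.comp_apply]
  · show Φ (f (b i j)) = κ (b i j)
    rw [f_b, κ_apply, δ'_b, toAdd_one, zpow_zero, mul_one]
    rw [_root_.map_mul, _root_.map_mul, map_zpow, map_zpow, Φ_x0, _root_.map_mul, Φ_succ,
      _root_.map_inv, Φ_x0, inr_pow, inr_pow]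
    have key : (inr (Multiplicative.ofAdd ((i.val : ℤ))) : B m q ⋊[θ] Multiplicative ℤ)
        * inl (b 0 j) * inr (Multiplicative.ofAdd (-(i.val : ℤ))) = inl (b i j) := by
      rw [show Multiplicative.ofAdd (-(i.val : ℤ))
          = (Multiplicative.ofAdd ((i.val : ℤ)))⁻¹ by simp, ← inl_aut]
      congr 1
      show (βe ^ ((i.val : ℤ)) : MulAut (B m q)) (b 0 j) = b i j
      rw [zpow_natCast]
      exact βe_pow_b_small i j
    rw [← key]
    group
  · show Φ (f c) = κ c
    rw [f_c, κ_apply, δ'_c, map_zpow, Φ_x0, inr_pow]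
    rw [toAdd_ofAdd, zpow_one, z, ← mul_assoc, ← _root_.map_mul]
    simp

lemma f_injective : Function.Injective (f (m := m) (q := q)) := by
  intro x y hxy
  have h1 : ∀ u : B m q, f u = 1 → u = 1 := by
    intro u hu
    have hκ : κ u = 1 := by
      rw [← Φ_comp_f]
      simp only [MonoidHom.comp_apply, hu, _root_.map_one]
    have hr : rightHom (κ u) = 1 := by rw [hκ, _root_.map_one]
    rw [κ_apply, _root_.map_mul, rightHom_inl, one_mul, map_zpow] at hr
    have hz : rightHom (z : B m q ⋊[θ] Multiplicative ℤ) = Multiplicative.ofAdd (q : ℤ) := by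
      rw [z, _root_.map_mul, rightHom_inl, one_mul, rightHom_inr]
    rw [hz] at hr
    have hq0 : (Multiplicative.toAdd (δ' u)) * (q : ℤ) = 0 := by
      have := congrArg Multiplicative.toAdd hr
      simpa [toAdd_zpow, mul_comm] using this
    have hδ : Multiplicative.toAdd (δ' u) = 0 := by
      have : (q : ℤ) ≠ 0 := by exact_mod_cast (NeZero.ne q)
      exact (mul_eq_zero.1 hq0).resolve_right this
    rw [κ_apply, hδ, zpow_zero, mul_one] at hκ
    exact inl_injective (by rw [hκ, _root_.map_one])
  have := h1 (x * y⁻¹) (by rw [_root_.map_mul, _root_.map_inv, hxy]; group)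
  have := mul_inv_eq_one.1 this
  exact this


def σ₁ : FreeGroup (Fin (m + 1)) →* Multiplicative ℤ :=
  FreeGroup.lift fun _ => Multiplicative.ofAdd (1 : ℤ)

@[simp] lemma σ₁_of (v : Fin (m + 1)) : σ₁ (of v) = Multiplicative.ofAdd (1 : ℤ) :=
  FreeGroup.lift_apply_of

lemma ofAdd_one_zpow (t : ℤ) : (Multiplicative.ofAdd (1 : ℤ)) ^ t = Multiplicative.ofAdd t := by
  rw [← ofAdd_zsmul, smul_eq_mul, mul_one]

@[simp] lemma σ₁_x0 : σ₁ (x0 : FreeGroup (Fin (m + 1))) = Multiplicative.ofAdd (1 : ℤ) :=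
  σ₁_of 0

@[simp] lemma σ₁_x0_zpow (k : ℤ) : σ₁ (x0 (m := m) ^ k) = Multiplicative.ofAdd k := by
  rw [map_zpow]
  show (σ₁ (of 0)) ^ k = _
  rw [σ₁_of, ofAdd_one_zpow]

lemma σ₁_comp_f : (σ₁ (m := m)).comp (f (m := m) (q := q))
    = (zpowGroupHom (q : ℤ)).comp δ' := by
  apply FreeGroup.ext_hom
  rintro (⟨i, j⟩ | ⟨⟩) <;> simp only [MonoidHom.comp_apply]
  · show σ₁ (f (b i j)) = zpowGroupHom (q : ℤ) (δ' (b i j))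
    rw [f_b, δ'_b]
    simp only [_root_.map_mul, _root_.map_inv, σ₁_x0_zpow, σ₁_of]
    apply Multiplicative.toAdd.injective
    simp only [toAdd_mul, toAdd_inv, toAdd_ofAdd, zpowGroupHom, σ₁_x0]
    simp
  · show σ₁ (f c) = zpowGroupHom (q : ℤ) (δ' c)
    rw [f_c, δ'_c, σ₁_x0_zpow]
    show _ = (Multiplicative.ofAdd (1:ℤ)) ^ (q : ℤ)
    rw [ofAdd_one_zpow]

lemma σp_eq : (FreeGroup.lift fun _ : Fin (m + 1) => Multiplicative.ofAdd ((p : ℕ) : ℤ))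
    = (zpowGroupHom ((p : ℕ) : ℤ)).comp (σ₁ (m := m)) := by
  apply FreeGroup.ext_hom
  intro v
  rw [FreeGroup.lift_apply_of]
  show _ = (σ₁ (of v)) ^ ((p:ℕ) : ℤ)
  rw [σ₁_of, ofAdd_one_zpow]

lemma rightHom_Φ (w : FreeGroup (Fin (m + 1))) :
    rightHom (Φ (q := q) w) = σ₁ w := by
  have h : (rightHom (φ := θ (m := m) (q := q))).comp Φ = σ₁ := by
    apply FreeGroup.ext_hom
    intro v
    simp only [MonoidHom.comp_apply]
    induction v using Fin.cases with
    | zero =>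
        show rightHom (Φ x0) = σ₁ x0
        rw [Φ_x0, rightHom_inr]
        show _ = σ₁ (of 0)
        rw [σ₁_of]
    | succ j => rw [Φ_succ, _root_.map_mul, rightHom_inl, rightHom_inr, one_mul, σ₁_of]
  exact congrArg (fun F => F.toFun w) h

lemma Ψ_apply (a : B m q ⋊[θ] Multiplicative ℤ) :
    Ψ a = f a.left * x0 ^ (Multiplicative.toAdd a.right) := rfl

lemma D_apply (a : B m q ⋊[θ] Multiplicative ℤ) : D a = δ' a.left := D_mk a.left a.right

lemma ΨΦ_apply (w : FreeGroup (Fin (m + 1))) : Ψ (Φ (q := q) w) = w :=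
  congrArg (fun F => F.toFun w) (ΨΦ (m := m) (q := q))

def τ : B m q →* Multiplicative ℤ :=
  FreeGroup.lift (Sum.elim (fun _ => (1 : Multiplicative ℤ))
    fun _ => Multiplicative.ofAdd (-(p : ℤ)))

lemma τ_eq : (τ (m := m) (q := q) p) = (zpowGroupHom (-(p : ℤ))).comp δ' := by
  apply FreeGroup.ext_hom
  rintro (⟨i, j⟩ | ⟨⟩) <;> simp only [MonoidHom.comp_apply]
  · show τ p (b i j) = zpowGroupHom (-(p:ℤ)) (δ' (b i j))
    rw [δ'_b, τ, b, FreeGroup.lift_apply_of]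
    simp
  · show τ p (c : B m q) = zpowGroupHom (-(p:ℤ)) (δ' c)
    rw [δ'_c, τ, c, FreeGroup.lift_apply_of]
    show _ = (Multiplicative.ofAdd (1:ℤ)) ^ (-(p:ℤ))
    rw [ofAdd_one_zpow]
    simp

end S9

/-- Let `G = F_n × ℤ`, `p, q` coprime positive integers, and
`φ : G → ℤ` be given by `φ(xᵢ) = p` and `φ(z) = q`. Then `φ` is surjective,
projection to `F_n` is injective on `ker φ`, its image is the set of elements
of `F_n` whose total exponent sum is divisible by `q`, and `ker φ` is free of
rank `q(n−1)+1`. -/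
theorem stmt_9 (n p q : ℕ) (hn : 1 ≤ n) (hp : 0 < p) (hq : 0 < q)
    (hpq : Nat.Coprime p q)
    (φ : FreeGroup (Fin n) × Multiplicative ℤ →* Multiplicative ℤ)
    (hφ : φ = MonoidHom.coprod (FreeGroup.lift fun _ => Multiplicative.ofAdd (p : ℤ))
      (zpowGroupHom (q : ℤ))) :
    Function.Surjective φ ∧
    Function.Injective (fun g : φ.ker => (g : FreeGroup (Fin n) × Multiplicative ℤ).1) ∧
    Set.range (fun g : φ.ker => (g : FreeGroup (Fin n) × Multiplicative ℤ).1) =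
      {w : FreeGroup (Fin n) |
        (q : ℤ) ∣ Multiplicative.toAdd
          ((FreeGroup.lift fun _ => Multiplicative.ofAdd (1 : ℤ)) w)} ∧
    Nonempty (φ.ker ≃* FreeGroup (Fin (q * (n - 1) + 1))) := by
  obtain ⟨m, rfl⟩ : ∃ m, n = m + 1 := ⟨n - 1, by omega⟩
  haveI : NeZero q := ⟨hq.ne'⟩
  have hσ : (FreeGroup.lift fun _ : Fin (m+1) => Multiplicative.ofAdd (1 : ℤ)) = S9.σ₁ := rfl
  have hval : ∀ (w : FreeGroup (Fin (m+1))) (t : Multiplicative ℤ),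
      φ (w, t) = Multiplicative.ofAdd
        ((p : ℤ) * Multiplicative.toAdd (S9.σ₁ w) + (q : ℤ) * Multiplicative.toAdd t) := by
    intro w t
    rw [hφ, MonoidHom.coprod_apply, S9.σp_eq]
    show (S9.σ₁ w) ^ ((p : ℕ) : ℤ) * t ^ ((q : ℕ) : ℤ) = _
    apply Multiplicative.toAdd.injective
    simp only [toAdd_mul, toAdd_zpow, toAdd_ofAdd, smul_eq_mul]
    try ring
  have hmem : ∀ (w : FreeGroup (Fin (m+1))) (t : Multiplicative ℤ),
      (w, t) ∈ φ.ker ↔ (p : ℤ) * Multiplicative.toAdd (S9.σ₁ w)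
        + (q : ℤ) * Multiplicative.toAdd t = 0 := by
    intro w t
    rw [MonoidHom.mem_ker, hval]
    constructor
    · intro h
      have h2 := congrArg Multiplicative.toAdd h
      simp only [toAdd_ofAdd, toAdd_one] at h2
      exact h2
    · intro h
      rw [h]
      rfl
  have hco : IsCoprime ((p : ℕ) : ℤ) ((q : ℕ) : ℤ) := by
    rw [Int.isCoprime_iff_gcd_eq_one]
    exact_mod_cast hpq
  have hq' : ((q : ℕ) : ℤ) ≠ 0 := by exact_mod_cast hq.ne'
  refine ⟨?_, ?_, ?_, ?_⟩
  · -- surjectivity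
    intro t
    obtain ⟨a, bb, hab⟩ := hco
    refine ⟨(S9.x0 ^ (a * Multiplicative.toAdd t),
      Multiplicative.ofAdd (bb * Multiplicative.toAdd t)), ?_⟩
    rw [hval, S9.σ₁_x0_zpow, toAdd_ofAdd, toAdd_ofAdd]
    conv_rhs => rw [← ofAdd_toAdd t]
    congr 1
    linear_combination Multiplicative.toAdd t * hab
  · -- injectivity of projection
    rintro ⟨⟨w₁, t₁⟩, h₁⟩ ⟨⟨w₂, t₂⟩, h₂⟩ h
    simp only at h
    subst h
    rw [hmem] at h₁ h₂
    have ht : Multiplicative.toAdd t₁ = Multiplicative.toAdd t₂ :=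
      mul_left_cancel₀ hq' (by linarith)
    exact Subtype.ext (Prod.ext rfl (Multiplicative.toAdd.injective ht))
  · -- range description
    ext w
    simp only [Set.mem_range, Set.mem_setOf_eq, hσ]
    constructor
    · rintro ⟨⟨⟨w', t⟩, hker⟩, rfl⟩
      rw [hmem] at hker
      have hd : ((q : ℕ) : ℤ) ∣ (p : ℤ) * Multiplicative.toAdd (S9.σ₁ w') :=
        ⟨-Multiplicative.toAdd t, by linarith⟩
      exact hco.symm.dvd_of_dvd_mul_left hd
    · rintro ⟨d, hd⟩
      exact ⟨⟨(w, Multiplicative.ofAdd (-((p : ℤ) * d))),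
        (hmem _ _).2 (by rw [hd, toAdd_ofAdd]; ring)⟩, rfl⟩
  · -- freeness of the kernel
    set F : S9.B m q →* FreeGroup (Fin (m+1)) × Multiplicative ℤ :=
      (S9.f (m := m) (q := q)).prod (S9.τ p) with hF
    have hτ : ∀ x : S9.B m q, S9.τ p x = (S9.δ' x) ^ (-(p : ℤ)) := by
      intro x
      rw [S9.τ_eq]
      rfl
    have hσf : ∀ x : S9.B m q, S9.σ₁ (S9.f x) = (S9.δ' x) ^ ((q : ℕ) : ℤ) := by
      intro x
      have := congrArg (fun F => F.toFun x) (S9.σ₁_comp_f (m := m) (q := q))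
      exact this
    have hFk : ∀ x : S9.B m q, F x ∈ φ.ker := by
      intro x
      have h1 : F x = (S9.f x, S9.τ p x) := rfl
      rw [h1, hmem, hτ, hσf]
      simp only [toAdd_zpow, smul_eq_mul]
      ring
    set F' : S9.B m q →* φ.ker := F.codRestrict φ.ker hFk with hF'
    have hinj : Function.Injective F' := by
      intro x y hxy
      apply S9.f_injective (m := m) (q := q)
      have := congrArg (fun u : φ.ker => (↑u : FreeGroup (Fin (m+1)) × Multiplicative ℤ).1) hxy
      exact this
    have hsurj : Function.Surjective F' := by
      rintro ⟨⟨w, t⟩, hker⟩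
      rw [hmem] at hker
      have hdvd : ((q : ℕ) : ℤ) ∣ Multiplicative.toAdd (S9.σ₁ w) :=
        hco.symm.dvd_of_dvd_mul_left ⟨-Multiplicative.toAdd t, by linarith⟩
      obtain ⟨d, hd⟩ := hdvd
      have hT : Multiplicative.toAdd t = -((p : ℤ) * d) := by
        apply mul_left_cancel₀ hq'
        rw [hd] at hker
        linarith
      refine ⟨(S9.Φ (q := q) w).left * S9.c ^ d, ?_⟩
      have hδx : S9.δ' ((S9.Φ (q := q) w).left * S9.c ^ d) = Multiplicative.ofAdd d := by
        rw [_root_.map_mul, map_zpow (S9.δ' (m := m) (q := q)), ← S9.D_apply, S9.D_Φ, one_mul, S9.δ'_c, S9.ofAdd_one_zpow]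
      have hfx : S9.f ((S9.Φ (q := q) w).left * S9.c ^ d) = w := by
        have hw : S9.Ψ (S9.Φ (q := q) w) = w := S9.ΨΦ_apply w
        rw [S9.Ψ_apply] at hw
        have hright : (S9.Φ (q := q) w).right = S9.σ₁ w := S9.rightHom_Φ w
        rw [_root_.map_mul, map_zpow, S9.f_c, ← zpow_mul, ← hd, ← hright]
        exact hw
      apply Subtype.ext
      show F ((S9.Φ (q := q) w).left * S9.c ^ d) = (w, t)
      rw [hF, MonoidHom.prod_apply, hfx, hτ, hδx]
      refine Prod.ext rfl ?_
      show (Multiplicative.ofAdd d) ^ (-(p : ℤ)) = t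
      apply Multiplicative.toAdd.injective
      rw [toAdd_zpow, toAdd_ofAdd, hT, smul_eq_mul]
      ring
    have idx : ((ZMod q × Fin m) ⊕ Unit) ≃ Fin (q * m + 1) :=
      Fintype.equivFinOfCardEq (by simp [ZMod.card])
    exact ⟨((MulEquiv.ofBijective F' ⟨hinj, hsurj⟩).symm.trans
      (FreeGroup.freeGroupCongr idx))⟩
end

section
/- Let G = F_n × ℤ with n ≥ 1, let z generate the ℤ factor, and let φ : G → ℤ be a surjective homomorphism with φ(z) ≠ 0. Then ker φ is a finitely generated free group; moreover if φ(z) = 0 and n ≥ 2 then ker φ is not finitely generated. -/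
lemma aux_finite_of_fg_freeGroup {α : Type} (h : Group.FG (FreeGroup α)) : Finite α := by
  have hos : Function.Surjective (Abelianization.of : FreeGroup α →* _) :=
    fun x => Quotient.inductionOn' x fun g => ⟨g, rfl⟩
  have h1 : Group.FG (Abelianization (FreeGroup α)) :=
    @Group.fg_of_surjective _ _ _ _ h _ hos
  have h2 : AddGroup.FG (FreeAbelianGroup α) := GroupFG.iff_add_fg.mp h1
  have h3 : AddGroup.FG (α →₀ ℤ) :=
    @AddGroup.fg_of_surjective _ _ _ _ h2 (FreeAbelianGroup.equivFinsupp α).toAddMonoidHom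
      (FreeAbelianGroup.equivFinsupp α).surjective
  have h4 : Module.Finite ℤ (α →₀ ℤ) := Module.Finite.iff_addGroup_fg.mpr h3
  exact Module.Finite.finite_basis (Finsupp.basisSingleOne (R := ℤ) (ι := α))

lemma aux_iso_fin {G : Type} [Group G] [IsFreeGroup G] (h : Group.FG G) :
    ∃ m : ℕ, Nonempty (G ≃* FreeGroup (Fin m)) := by
  let e := IsFreeGroup.toFreeGroup (G := G)
  have hF : Group.FG (FreeGroup (IsFreeGroup.Generators G)) :=
    @Group.fg_of_surjective _ _ _ _ h e.toMonoidHom e.surjective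
  have : Finite (IsFreeGroup.Generators G) := aux_finite_of_fg_freeGroup hF
  have : Fintype (IsFreeGroup.Generators G) := Fintype.ofFinite _
  refine ⟨Fintype.card (IsFreeGroup.Generators G),
    ⟨e.trans (FreeGroup.freeGroupCongr (Fintype.equivFin _))⟩⟩

lemma part1aux (n : ℕ)
    (φ : FreeGroup (Fin n) × Multiplicative ℤ →* Multiplicative ℤ)
    (hz : φ (1, Multiplicative.ofAdd 1) ≠ 1)
    (d : ℤ) (hdd : d = Multiplicative.toAdd (φ (1, Multiplicative.ofAdd 1)))
    (hd : d ≠ 0)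
    (key : ∀ (g : FreeGroup (Fin n)) (w : Multiplicative ℤ),
      φ (g, w) = φ (g, 1) * Multiplicative.ofAdd (Multiplicative.toAdd w * d)) :
    ∃ m : ℕ, Nonempty (φ.ker ≃* FreeGroup (Fin m)) := by
  classical
  set m0 := d.natAbs with hm0
  haveI : NeZero m0 := ⟨Int.natAbs_ne_zero.mpr hd⟩
  set ψ' : FreeGroup (Fin n) →* Multiplicative ℤ :=
    φ.comp (MonoidHom.inl _ _) with hψ'
  set χ : FreeGroup (Fin n) →* Multiplicative (ZMod m0) :=
    (AddMonoidHom.toMultiplicative (Int.castAddHom (ZMod m0))).comp ψ' with hχ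
  have hH : Subgroup.map (MonoidHom.fst _ _) φ.ker = χ.ker := by
    ext g
    simp only [Subgroup.mem_map, MonoidHom.mem_ker, MonoidHom.coe_fst]
    constructor
    · rintro ⟨⟨g', w⟩, hgw, rfl⟩
      rw [key] at hgw
      have : Multiplicative.toAdd (ψ' g') + Multiplicative.toAdd w * d = 0 := by
        have := congrArg Multiplicative.toAdd hgw
        rw [mul_comm]
        simpa [hψ'] using this
      have hdvd : (m0 : ℤ) ∣ Multiplicative.toAdd (ψ' g') := by
        rw [hm0, Int.natAbs_dvd]
        exact ⟨-Multiplicative.toAdd w, by linarith [mul_comm d (Multiplicative.toAdd w)]⟩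
      simp only [hχ, MonoidHom.comp_apply]
      have := (ZMod.intCast_zmod_eq_zero_iff_dvd _ _).mpr hdvd
      exact Multiplicative.toAdd.injective (by simpa using this)
    · intro hg
      have hdvd : (m0 : ℤ) ∣ Multiplicative.toAdd (ψ' g) := by
        rw [← ZMod.intCast_zmod_eq_zero_iff_dvd]
        have := congrArg Multiplicative.toAdd hg
        simpa [hχ] using this
      rw [hm0, Int.natAbs_dvd] at hdvd
      obtain ⟨k, hk⟩ := hdvd
      refine ⟨(g, Multiplicative.ofAdd (-k)), ?_, rfl⟩
      rw [key]
      have h2 : φ (g, 1) = ψ' g := by simp [hψ']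
      rw [h2, ← ofAdd_toAdd (ψ' g), hk, toAdd_ofAdd, ← ofAdd_add]
      norm_num [mul_comm]
  haveI hfin : (Subgroup.map (MonoidHom.fst _ _) φ.ker).FiniteIndex := by
    rw [hH]; infer_instance
  haveI hFGfree : Group.FG (FreeGroup (Fin n)) := by
    rw [Group.fg_iff]
    exact ⟨Set.range FreeGroup.of, FreeGroup.closure_range_of _, Set.finite_range _⟩
  haveI hfg : Group.FG (Subgroup.map (MonoidHom.fst (FreeGroup (Fin n)) (Multiplicative ℤ)) φ.ker) :=
    inferInstance
  set f := (MonoidHom.fst (FreeGroup (Fin n)) (Multiplicative ℤ)).subgroupMap φ.ker with hf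
  have hsurj' : Function.Surjective f := (MonoidHom.fst _ _).subgroupMap_surjective φ.ker
  have hinj : Function.Injective f := by
    rw [injective_iff_map_eq_one]
    rintro ⟨⟨g, w⟩, hgw⟩ h1
    have hg : g = 1 := Subtype.ext_iff.mp h1
    subst hg
    rw [MonoidHom.mem_ker, key] at hgw
    have h2 : ((1 : FreeGroup (Fin n)), (1 : Multiplicative ℤ)) = 1 := rfl
    rw [h2, map_one, one_mul] at hgw
    have h3 : Multiplicative.toAdd w * d = 0 := by simpa only [toAdd_ofAdd, toAdd_one] using congrArg Multiplicative.toAdd hgw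
    have h4 : Multiplicative.toAdd w = 0 := by
      rcases mul_eq_zero.mp h3 with h | h
      · exact h
      · exact absurd h hd
    have h5 : w = 1 := by
      have := congrArg Multiplicative.ofAdd h4
      simpa using this
    subst h5
    rfl
  obtain ⟨m, ⟨e2⟩⟩ := aux_iso_fin hfg
  exact ⟨m, ⟨(MulEquiv.ofBijective f ⟨hinj, hsurj'⟩).trans e2⟩⟩

lemma part1 (n : ℕ)
    (φ : FreeGroup (Fin n) × Multiplicative ℤ →* Multiplicative ℤ)
    (hz : φ (1, Multiplicative.ofAdd 1) ≠ 1) :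
    ∃ m : ℕ, Nonempty (φ.ker ≃* FreeGroup (Fin m)) := by
  set d : ℤ := Multiplicative.toAdd (φ (1, Multiplicative.ofAdd 1)) with hdd
  have hd : d ≠ 0 := by
    intro h
    apply hz
    have := congrArg Multiplicative.ofAdd h
    simpa [hdd] using this
  have key : ∀ (g : FreeGroup (Fin n)) (w : Multiplicative ℤ),
      φ (g, w) = φ (g, 1) * Multiplicative.ofAdd (Multiplicative.toAdd w * d) := by
    intro g w
    have h1 : (g, w) = (g, (1 : Multiplicative ℤ)) *
        ((1 : FreeGroup (Fin n)), Multiplicative.ofAdd 1) ^ (Multiplicative.toAdd w) := by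
      ext <;> simp [← ofAdd_zsmul]
    have h2 : Multiplicative.ofAdd (Multiplicative.toAdd w * d)
        = (φ (1, Multiplicative.ofAdd 1)) ^ (Multiplicative.toAdd w) := by
      rw [← smul_eq_mul, ofAdd_zsmul, hdd, ofAdd_toAdd]
    rw [h1, map_mul, map_zpow, h2]
  exact part1aux n φ hz d hdd hd key


noncomputable def shiftHom : Multiplicative ℤ →* MulAut (Multiplicative (ℤ →₀ ℤ)) where
  toFun k := AddEquiv.toMultiplicative (Finsupp.domCongr (Equiv.addRight (Multiplicative.toAdd k)))
  map_one' := by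
    ext f : 1
    apply Multiplicative.toAdd.injective
    ext x
    simp [Finsupp.domCongr_apply, Finsupp.equivMapDomain_apply, Equiv.Perm.one_symm, Equiv.Perm.one_apply]
  map_mul' a b := by
    ext f : 1
    apply Multiplicative.toAdd.injective
    ext x
    simp [Finsupp.domCongr_apply, Finsupp.equivMapDomain_apply, Equiv.Perm.mul_def, Equiv.symm_trans_apply]
    ring_nf

lemma shiftHom_apply (k : Multiplicative ℤ) (f : Multiplicative (ℤ →₀ ℤ)) (x : ℤ) :
    Multiplicative.toAdd (shiftHom k f) x
      = Multiplicative.toAdd f (x - Multiplicative.toAdd k) := by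
  simp [shiftHom, Finsupp.domCongr_apply, Finsupp.equivMapDomain_apply, sub_eq_add_neg]

open SemidirectProduct in
lemma conj_inl (a : Multiplicative (ℤ →₀ ℤ) ⋊[shiftHom] Multiplicative ℤ)
    (y : Multiplicative (ℤ →₀ ℤ)) :
    a * SemidirectProduct.inl y * a⁻¹ = SemidirectProduct.inl (shiftHom a.right y) := by
  ext
  · simp only [mul_left, inv_left, inv_right, left_inl, right_inl, map_mul, map_inv,
      MulAut.apply_inv_self, mul_one]
    group
    simp [mul_comm]
  · simp [mul_right, inv_right, right_inl]

open SemidirectProduct in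
lemma eq_inl (x : Multiplicative (ℤ →₀ ℤ) ⋊[shiftHom] Multiplicative ℤ)
    (h : x.right = 1) : x = SemidirectProduct.inl x.left := by
  ext <;> simp [h]

open SemidirectProduct in
lemma part2core (n : ℕ) (hn2 : 2 ≤ n) (ψ : FreeGroup (Fin n) →* Multiplicative ℤ)
    (hψsurj : Function.Surjective ψ) : ¬ Group.FG ψ.ker := by
  classical
  intro hFG
  -- choose t with ψ t = ofAdd 1
  obtain ⟨t, ht⟩ := hψsurj (Multiplicative.ofAdd 1)
  -- indices
  have h0 : (0 : ℕ) < n := by omega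
  have h1 : (1 : ℕ) < n := by omega
  set i0 : Fin n := ⟨0, h0⟩
  set i1 : Fin n := ⟨1, h1⟩
  -- choose coefficients and test element
  obtain ⟨c, u, hu, hu0⟩ :
      ∃ (c : Fin n → (ℤ →₀ ℤ)) (u : FreeGroup (Fin n)), u ∈ ψ.ker ∧
        Multiplicative.toAdd
          ((FreeGroup.lift ((fun i => inl (Multiplicative.ofAdd (c i))
            * inr (ψ (FreeGroup.of i))) : Fin n →
              Multiplicative (ℤ →₀ ℤ) ⋊[shiftHom] Multiplicative ℤ) u).left) 0 = 1 := by
    have hne : i1 ≠ i0 := by simp [i0, i1, Fin.ext_iff]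
    by_cases hψ1 : ψ (FreeGroup.of i1) = 1
    · refine ⟨fun i => if i = i1 then Finsupp.single 0 1 else 0, FreeGroup.of i1, hψ1, ?_⟩
      rw [FreeGroup.lift_apply_of]
      simp only [hψ1, map_one, mul_one, if_pos rfl, SemidirectProduct.left_inl, toAdd_ofAdd]
      exact Finsupp.single_eq_same
    · refine ⟨fun i => if i = i0 then Finsupp.single 0 1 else 0,
        FreeGroup.of i0 * FreeGroup.of i1 * (FreeGroup.of i0)⁻¹ * (FreeGroup.of i1)⁻¹, ?_, ?_⟩
      · rw [MonoidHom.mem_ker]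
        simp only [map_mul, map_inv]
        apply Multiplicative.toAdd.injective
        simp only [toAdd_mul, toAdd_inv, toAdd_one]
        ring
      · have ha1 : Multiplicative.toAdd (ψ (FreeGroup.of i1)) ≠ 0 := by
          intro h
          apply hψ1
          have := congrArg Multiplicative.ofAdd h
          simpa using this
        simp only [map_mul, map_inv, FreeGroup.lift_apply_of, if_pos rfl, if_neg hne]
        set a0 := ψ (FreeGroup.of i0)
        set a1 := ψ (FreeGroup.of i1)
        simp only [SemidirectProduct.mul_left, SemidirectProduct.mul_right,
          SemidirectProduct.inv_left, SemidirectProduct.inv_right,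
          SemidirectProduct.left_inl, SemidirectProduct.right_inl,
          SemidirectProduct.left_inr, SemidirectProduct.right_inr,
          map_one, map_mul, map_inv, one_mul, mul_one, toAdd_mul, toAdd_inv, toAdd_ofAdd,
          Finsupp.add_apply, Finsupp.neg_apply, shiftHom_apply]
        simp only [← map_inv, ← map_mul, map_one, if_true, ofAdd_zero, shiftHom_apply,
          toAdd_ofAdd, toAdd_one, toAdd_mul, toAdd_inv, Finsupp.coe_zero, Pi.zero_apply,
          Finsupp.single_apply]
        split_ifs with hc1 hc2 hc3 <;> omega
  set Φ : FreeGroup (Fin n) →* Multiplicative (ℤ →₀ ℤ) ⋊[shiftHom] Multiplicative ℤ :=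
    FreeGroup.lift (fun i => inl (Multiplicative.ofAdd (c i)) * inr (ψ (FreeGroup.of i)))
    with hΦ
  have hright : ∀ g, (Φ g).right = ψ g := by
    intro g
    have : rightHom.comp Φ = ψ := by
      apply FreeGroup.ext_hom
      intro a
      simp [hΦ, rightHom]
    have := DFunLike.congr_fun this g
    simpa [rightHom] using this
  -- homomorphism F from the kernel
  set F : ψ.ker →* Multiplicative (ℤ →₀ ℤ) :=
    { toFun := fun x => (Φ x.1).left
      map_one' := by simp
      map_mul' := by
        rintro ⟨x, hx⟩ ⟨y, hy⟩
        have hx1 : (Φ x).right = 1 := by rw [hright]; exact hx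
        show (Φ (x * y)).left = (Φ x).left * (Φ y).left
        rw [map_mul, mul_left, hx1, map_one, MulAut.one_apply] } with hF
  -- conjugation formula
  have hconj : ∀ (w : FreeGroup (Fin n)) (x : FreeGroup (Fin n)) (hx : x ∈ ψ.ker),
      (Φ (w * x * w⁻¹)).left = shiftHom (ψ w) ((Φ x).left) := by
    intro w x hx
    have hx1 : (Φ x).right = 1 := by rw [hright]; exact hx
    rw [map_mul, map_mul, map_inv, eq_inl (Φ x) hx1, conj_inl]
    simp [left_inl, hright]
  -- the finite generating set bounds supports
  obtain ⟨S, hSclos, hSfin⟩ := Group.fg_iff.mp hFG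
  set A : Set ℤ := ⋃ s ∈ S, ((Multiplicative.toAdd (F s)).support : Set ℤ) with hA
  have hAfin : A.Finite := Set.Finite.biUnion hSfin (fun s _ => (Multiplicative.toAdd (F s)).support.finite_toSet)
  set T : Subgroup (Multiplicative (ℤ →₀ ℤ)) :=
    { carrier := {f | ∀ x : ℤ, x ∉ A → Multiplicative.toAdd f x = 0}
      one_mem' := by intro x hx; simp
      mul_mem' := by
        intro f g hf hg x hx
        have : Multiplicative.toAdd (f * g) = Multiplicative.toAdd f + Multiplicative.toAdd g := rfl
        rw [this, Finsupp.add_apply, hf x hx, hg x hx, add_zero]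
      inv_mem' := by
        intro f hf x hx
        have : Multiplicative.toAdd f⁻¹ = -Multiplicative.toAdd f := rfl
        rw [this, Finsupp.neg_apply, hf x hx, neg_zero] } with hT
  have hFT : ∀ x : ψ.ker, F x ∈ T := by
    have hle : (⊤ : Subgroup ψ.ker) ≤ T.comap F := by
      rw [← hSclos]
      apply Subgroup.closure_le _ |>.mpr
      intro s hs
      simp only [SetLike.mem_coe, Subgroup.mem_comap]
      intro x hx
      by_contra hne
      exact hx (hA ▸ Set.mem_biUnion hs (by simpa [Finsupp.mem_support_iff] using hne))
    intro x
    exact (Subgroup.mem_comap).mp (hle (Subgroup.mem_top x))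
  -- escaping elements
  have hesc : ∀ q : ℤ, q ∈ A := by
    intro q
    have hwu : t ^ q * u * (t ^ q)⁻¹ ∈ ψ.ker := by
      have : ψ (t ^ q * u * (t ^ q)⁻¹) = ψ (t ^ q) * ψ u * (ψ (t ^ q))⁻¹ := by
        simp [map_mul, map_inv]
      rw [MonoidHom.mem_ker, this, hu, mul_one]
      simp
    have hval : Multiplicative.toAdd (F ⟨_, hwu⟩) q = 1 := by
      show Multiplicative.toAdd ((Φ (t ^ q * u * (t ^ q)⁻¹)).left) q = 1
      rw [hconj _ _ hu, shiftHom_apply]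
      have : ψ (t ^ q) = Multiplicative.ofAdd q := by rw [map_zpow, ht, ← ofAdd_zsmul]; simp
      rw [this]
      simpa using hu0
    by_contra hq
    have := hFT ⟨_, hwu⟩ q hq
    rw [hval] at this
    exact one_ne_zero this
  have : A = Set.univ := Set.eq_univ_of_forall hesc
  rw [this] at hAfin
  exact Set.infinite_univ hAfin


/-- Let `G = F_n × ℤ`, `z` a generator of the `ℤ` factor, and `φ : G → ℤ` a
surjective homomorphism. If `φ(z) ≠ 0` then `ker φ` is a finitely generated
free group; if `φ(z) = 0` and `n ≥ 2` then `ker φ` is not finitely generated. -/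
theorem stmt_10 (n : ℕ) (hn : 1 ≤ n)
    (φ : FreeGroup (Fin n) × Multiplicative ℤ →* Multiplicative ℤ)
    (hsurj : Function.Surjective φ) :
    (φ (1, Multiplicative.ofAdd 1) ≠ 1 →
      ∃ m : ℕ, Nonempty (φ.ker ≃* FreeGroup (Fin m))) ∧
    (φ (1, Multiplicative.ofAdd 1) = 1 → 2 ≤ n → ¬ Group.FG φ.ker) := by
  constructor
  · intro hz
    exact part1 n φ hz
  · intro hz hn2 hFG
    set ψ : FreeGroup (Fin n) →* Multiplicative ℤ := φ.comp (MonoidHom.inl _ _) with hψ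
    have key : ∀ (g : FreeGroup (Fin n)) (w : Multiplicative ℤ), φ (g, w) = ψ g := by
      intro g w
      have h1 : (g, w) = (g, (1 : Multiplicative ℤ)) *
          ((1 : FreeGroup (Fin n)), Multiplicative.ofAdd 1) ^ (Multiplicative.toAdd w) := by
        ext <;> simp [← ofAdd_zsmul]
      rw [h1, map_mul, map_zpow, hz, one_zpow, mul_one]
      rfl
    have hψsurj : Function.Surjective ψ := by
      intro x
      obtain ⟨⟨g, w⟩, h⟩ := hsurj x
      exact ⟨g, by rw [← h, key]⟩
    have hKfg : Group.FG ψ.ker := by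
      have hp : ∀ x : φ.ker, (x : FreeGroup (Fin n) × Multiplicative ℤ).1 ∈ ψ.ker := by
        rintro ⟨⟨g, w⟩, hx⟩
        rw [MonoidHom.mem_ker] at hx ⊢
        rw [← key g w]
        exact hx
      let p : φ.ker →* ψ.ker :=
      { toFun := fun x => ⟨(x : FreeGroup (Fin n) × Multiplicative ℤ).1, hp x⟩
        map_one' := rfl
        map_mul' := fun x y => rfl }
      have hpsurj : Function.Surjective p := by
        rintro ⟨g, hg⟩
        exact ⟨⟨(g, 1), by rw [MonoidHom.mem_ker, key]; exact hg⟩, rfl⟩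
      exact Group.fg_of_surjective hpsurj
    exact part2core n hn2 ψ hψsurj hKfg
end

section
/- Let F be a free group of rank n ≥ 2 and let N ⊴ F be a nontrivial normal subgroup of infinite index. Then N is not finitely generated. -/
namespace Stmt16Aux

open FreeGroup

variable {α : Type*} [DecidableEq α]

/-- Two adjacent letters that do not cancel. -/
def NoCancel (x y : α × Bool) : Prop := y ≠ (x.1, !x.2)

theorem reduce_eq_self_of_chain' {L : List (α × Bool)} (h : L.Chain' NoCancel) :
    FreeGroup.reduce L = L := by
  induction L with
  | nil => rfl
  | cons x L ih =>
    rw [FreeGroup.reduce.cons, ih h.tail]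
    cases L with
    | nil => rfl
    | cons y t =>
      have hxy : NoCancel x y := (List.isChain_cons_cons.mp h).1
      simp only [List.casesOn]
      rw [if_neg]
      rintro ⟨h1, h2⟩
      exact hxy (Prod.ext h1.symm (by rw [h2, Bool.not_not]))

theorem exists_step_of_not_chain' {L : List (α × Bool)} (h : ¬ L.Chain' NoCancel) :
    ∃ L', FreeGroup.Red.Step L L' := by
  induction L with
  | nil => exact absurd List.isChain_nil h
  | cons x L ih =>
    cases L with
    | nil => exact absurd (List.isChain_singleton x) h
    | cons y t =>
      change ¬ List.IsChain _ _ at h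
      rw [List.isChain_cons_cons] at h
      by_cases hxy : NoCancel x y
      · obtain ⟨L', hL'⟩ := ih (fun hc => h ⟨hxy, hc⟩)
        exact ⟨x :: L', hL'.cons⟩
      · rw [NoCancel, not_not] at hxy
        refine ⟨t, ?_⟩
        have : FreeGroup.Red.Step ((x.1, x.2) :: (x.1, !x.2) :: t) t :=
          FreeGroup.Red.Step.cons_not
        simpa [← hxy] using this

theorem chain'_toWord (g : FreeGroup α) : g.toWord.Chain' NoCancel := by
  by_contra h
  obtain ⟨L', hs⟩ := exists_step_of_not_chain' h
  have h1 : FreeGroup.reduce g.toWord = g.toWord := reduce_toWord g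
  have h2 : FreeGroup.reduce g.toWord = FreeGroup.reduce L' := FreeGroup.reduce.Step.eq hs
  have h3 : L'.length + 2 = g.toWord.length := hs.length
  have h4 : (FreeGroup.reduce L').length ≤ L'.length :=
    FreeGroup.Red.length_le FreeGroup.reduce.red
  rw [← h2, h1] at h4
  omega

theorem invRev_append (L₁ L₂ : List (α × Bool)) :
    FreeGroup.invRev (L₁ ++ L₂) = FreeGroup.invRev L₂ ++ FreeGroup.invRev L₁ := by
  simp [FreeGroup.invRev]

theorem invRev_singleton (x : α × Bool) :
    FreeGroup.invRev [x] = [(x.1, !x.2)] := by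
  simp [FreeGroup.invRev]

/-- Cancellation structure of a product of two reduced words. -/
theorem exists_cancel (a b : FreeGroup α) :
    ∃ p t q, a.toWord = p ++ t ∧ b.toWord = FreeGroup.invRev t ++ q ∧
      (a * b).toWord = p ++ q := by
  suffices H : ∀ m (a b : FreeGroup α), a.toWord.length = m →
      ∃ p t q, a.toWord = p ++ t ∧ b.toWord = FreeGroup.invRev t ++ q ∧
        (a * b).toWord = p ++ q from H _ a b rfl
  intro m
  induction m using Nat.strong_induction_on with
  | _ m ih =>
    intro a b hm
    rcases List.eq_nil_or_concat a.toWord with h0 | ⟨l, x, hx⟩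
    · have ha : a = 1 := toWord_eq_nil_iff.mp h0
      exact ⟨[], [], b.toWord, by simp [h0], by simp [invRev_empty], by simp [ha]⟩
    · rw [List.concat_eq_append] at hx
      cases hb : b.toWord with
      | nil =>
        have hb1 : b = 1 := toWord_eq_nil_iff.mp hb
        exact ⟨a.toWord, [], [], by simp, by simp [hb1, invRev_empty], by simp [hb1]⟩
      | cons y β =>
        by_cases hy : y = (x.1, !x.2)
        · -- cancellation at the junction
          have hca : l.Chain' NoCancel := by
            have := chain'_toWord a; rw [hx] at this
            exact (List.isChain_append.mp this).1
          have hcb : β.Chain' NoCancel := by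
            have := chain'_toWord b; rw [hb] at this
            exact this.tail
          have ha' : (FreeGroup.mk l).toWord = l := by
            rw [toWord_mk, reduce_eq_self_of_chain' hca]
          have hb' : (FreeGroup.mk β).toWord = β := by
            rw [toWord_mk, reduce_eq_self_of_chain' hcb]
          have haa : a = FreeGroup.mk l * FreeGroup.mk [x] := by
            rw [FreeGroup.mul_mk, ← hx, mk_toWord]
          have hbb : b = FreeGroup.mk [y] * FreeGroup.mk β := by
            rw [FreeGroup.mul_mk, List.singleton_append, ← hb, mk_toWord]
          have hxy : FreeGroup.mk [x] * FreeGroup.mk [y] = 1 := by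
            rw [FreeGroup.mul_mk, hy, List.singleton_append]
            have : FreeGroup.Red.Step ((x.1, x.2) :: (x.1, !x.2) :: ([] : List (α × Bool))) [] :=
              FreeGroup.Red.Step.cons_not
            have := FreeGroup.reduce.Step.eq this
            have h1 : FreeGroup.mk ((x.1, x.2) :: (x.1, !x.2) :: ([] : List (α × Bool)))
                = FreeGroup.mk [] := FreeGroup.reduce.exact (by rw [this])
            simpa [← FreeGroup.one_eq_mk] using h1
          have key : a * b = FreeGroup.mk l * FreeGroup.mk β := by
            rw [haa, hbb, mul_assoc, ← mul_assoc (FreeGroup.mk [x]), hxy, one_mul]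
          have hlen : l.length < m := by
            rw [← hm, hx, List.length_append]; simp
          obtain ⟨p, t, q, h1, h2, h3⟩ := ih l.length hlen (FreeGroup.mk l) (FreeGroup.mk β)
            (by rw [ha'])
          rw [ha'] at h1
          rw [hb'] at h2
          refine ⟨p, t ++ [x], q, ?_, ?_, ?_⟩
          · rw [hx, h1, List.append_assoc]
          · rw [h2]
            rw [invRev_append]
            rw [invRev_singleton]
            rw [← hy]
            simp
          · rw [key, h3]
        · -- no cancellation: the concatenation is reduced
          refine ⟨a.toWord, [], y :: β, by simp, by simp [invRev_empty], ?_⟩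
          rw [← hb]
          have hmul : a * b = FreeGroup.mk (a.toWord ++ b.toWord) := by
            rw [← FreeGroup.mul_mk, mk_toWord, mk_toWord]
          rw [hmul, toWord_mk, reduce_eq_self_of_chain']
          change List.IsChain _ _
          rw [List.isChain_append]
          refine ⟨chain'_toWord a, chain'_toWord b, ?_⟩
          intro u hu v hv
          rw [hx] at hu
          rw [hb] at hv
          rw [List.getLast?_concat] at hu
          simp only [List.head?_cons, Option.mem_some_iff] at hu hv
          subst hu; subst hv
          exact hy

/-- Prefix dichotomy: a prefix of the reduced word of `a * b` is either a prefix of the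
word of `a`, or is `a` times (an element given by) a prefix of the word of `b`. -/
theorem prefix_structure (a b : FreeGroup α) {p q : List (α × Bool)}
    (h : (a * b).toWord = p ++ q) :
    (p <+: a.toWord) ∨ ∃ r, r <+: b.toWord ∧ FreeGroup.mk p = a * FreeGroup.mk r := by
  obtain ⟨P, t, Q, hP, hQ, hPQ⟩ := exists_cancel a b
  rw [h] at hPQ
  rcases List.append_eq_append_iff.mp hPQ with ⟨a', ha1, _⟩ | ⟨c', hc1, hc2⟩
  · left
    exact ⟨a' ++ t, by rw [hP, ha1, List.append_assoc]⟩
  · right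
    refine ⟨FreeGroup.invRev t ++ c', ⟨q, by rw [hQ, hc2, List.append_assoc]⟩, ?_⟩
    have hmkP : FreeGroup.mk P = a * FreeGroup.mk (FreeGroup.invRev t) := by
      rw [← FreeGroup.inv_mk]
      have : a = FreeGroup.mk P * FreeGroup.mk t := by
        rw [FreeGroup.mul_mk, ← hP, mk_toWord]
      rw [this, mul_assoc, mul_inv_cancel, mul_one]
    rw [hc1, ← FreeGroup.mul_mk, hmkP, ← FreeGroup.mul_mk, mul_assoc]

/-- Quasiconvexity: any prefix of the reduced word of an element of `closure S` is within
distance `L` of `closure S`, where `L` bounds the lengths of elements of `S`. -/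
theorem quasiconvex {S : Set (FreeGroup α)} {L : ℕ}
    (hS : ∀ s ∈ S, s.toWord.length ≤ L) {u : FreeGroup α}
    (hu : u ∈ Subgroup.closure S) :
    ∀ p q, u.toWord = p ++ q →
      ∃ h ∈ Subgroup.closure S, ((h⁻¹ * FreeGroup.mk p).toWord).length ≤ L := by
  induction hu using Subgroup.closure_induction with
  | mem s hs =>
    intro p q hpq
    refine ⟨1, one_mem _, ?_⟩
    rw [inv_one, one_mul, toWord_mk]
    calc (FreeGroup.reduce p).length ≤ p.length :=
          FreeGroup.Red.length_le FreeGroup.reduce.red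
      _ ≤ s.toWord.length := by rw [hpq]; simp
      _ ≤ L := hS s hs
  | one =>
    intro p q hpq
    rw [toWord_one] at hpq
    have hp : p = [] := by
      have := congrArg List.length hpq
      simp at this
      exact List.eq_nil_of_length_eq_zero (by omega)
    refine ⟨1, one_mem _, ?_⟩
    simp [hp]
  | mul x y hx hy ihx ihy =>
    intro p q hpq
    rcases prefix_structure x y hpq with ⟨q', hq'⟩ | ⟨r, ⟨s', hs'⟩, hmk⟩
    · exact ihx p q' hq'.symm
    · obtain ⟨h, hh, hlen⟩ := ihy r s' hs'.symm
      refine ⟨x * h, mul_mem hx hh, ?_⟩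
      have : (x * h)⁻¹ * FreeGroup.mk p = h⁻¹ * FreeGroup.mk r := by
        rw [hmk, mul_inv_rev, mul_assoc, ← mul_assoc x⁻¹, inv_mul_cancel, one_mul]
      rw [this]; exact hlen
  | inv x hx ihx =>
    intro p q hpq
    rw [toWord_inv] at hpq
    have hxw : x.toWord = FreeGroup.invRev q ++ FreeGroup.invRev p := by
      rw [← FreeGroup.invRev_invRev (L₁ := x.toWord), hpq, invRev_append]
    obtain ⟨h, hh, hlen⟩ := ihx (FreeGroup.invRev q) (FreeGroup.invRev p) hxw
    refine ⟨x⁻¹ * h, mul_mem (inv_mem hx) hh, ?_⟩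
    have hxsplit : x = FreeGroup.mk (FreeGroup.invRev q) * FreeGroup.mk (FreeGroup.invRev p) := by
      rw [FreeGroup.mul_mk, ← hxw, mk_toWord]
    have hmkp : FreeGroup.mk p = (FreeGroup.mk (FreeGroup.invRev p))⁻¹ := by
      rw [FreeGroup.inv_mk, FreeGroup.invRev_invRev]
    have : (x⁻¹ * h)⁻¹ * FreeGroup.mk p = h⁻¹ * FreeGroup.mk (FreeGroup.invRev q) := by
      rw [mul_inv_rev, inv_inv, mul_assoc, hmkp]
      congr 1
      rw [hxsplit, mul_assoc, mul_inv_cancel, mul_one]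
    rw [this]; exact hlen

end Stmt16Aux

open Stmt16Aux FreeGroup in
/-- A nontrivial normal subgroup of infinite index in a free group of rank
`n ≥ 2` is not finitely generated. -/
theorem stmt_16 (n : ℕ) (hn : 2 ≤ n) (N : Subgroup (FreeGroup (Fin n)))
    [N.Normal] (hN : N ≠ ⊥) (hidx : N.index = 0) :
    ¬ Group.FG N := by
  intro hFG
  -- a nontrivial element of N
  obtain ⟨w, hwN, hw1⟩ : ∃ w ∈ N, w ≠ 1 := by
    by_contra h
    push_neg at h
    exact hN ((Subgroup.eq_bot_iff_forall N).mpr h)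
  -- finite generating set and length bound
  obtain ⟨S, hScl⟩ := (Group.fg_iff_subgroup_fg N).mp hFG
  set L := S.sup (fun s => s.toWord.length) with hL
  have hSle : ∀ s ∈ (S : Set (FreeGroup (Fin n))), s.toWord.length ≤ L :=
    fun s hs => Finset.le_sup (f := fun s => s.toWord.length) (Finset.mem_coe.mp hs)
  -- every coset of N has a representative of length at most L + 1
  have key : ∀ g : FreeGroup (Fin n),
      ∃ k : FreeGroup (Fin n), k⁻¹ * g ∈ N ∧ k.toWord.length ≤ L + 1 := by
    intro g
    set T : Set ℕ := {m | ∃ k : FreeGroup (Fin n), k.toWord.length = m ∧ k⁻¹ * g ∈ N} with hT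
    have hTne : T.Nonempty := ⟨g.toWord.length, g, rfl, by simp [one_mem]⟩
    obtain ⟨g₀, hg₀len, hg₀⟩ := Nat.sInf_mem hTne
    have hmin : ∀ k : FreeGroup (Fin n), k⁻¹ * g ∈ N →
        g₀.toWord.length ≤ k.toWord.length := by
      intro k hk
      rw [hg₀len]
      exact Nat.sInf_le ⟨k, rfl, hk⟩
    refine ⟨g₀, hg₀, ?_⟩
    rcases eq_or_ne g₀.toWord [] with hγ | hγ
    · rw [hγ]; simp
    -- last letter of g₀ and first/last letters of w
    have hω : w.toWord ≠ [] := fun h => hw1 (toWord_eq_nil_iff.mp h)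
    obtain ⟨γ', z, hγz⟩ : ∃ l x, g₀.toWord = l ++ [x] := by
      rcases List.eq_nil_or_concat g₀.toWord with h | h
      · exact absurd h hγ
      · obtain ⟨l, x, h⟩ := h
        exact ⟨l, x, by rw [h, List.concat_eq_append]⟩
    set a := w.toWord.head hω with ha
    set bl := w.toWord.getLast hω with hbl
    -- a fresh letter x avoiding cancellation
    obtain ⟨x, hxa, hxb, hxz⟩ : ∃ x : Fin n × Bool,
        x ≠ (a.1, !a.2) ∧ x ≠ bl ∧ x ≠ (z.1, !z.2) := by
      classical
      set s : Finset (Fin n × Bool) := {(a.1, !a.2), bl, (z.1, !z.2)} with hs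
      have hcard : s.card ≤ 3 := by
        apply le_trans (Finset.card_insert_le _ _)
        have := Finset.card_insert_le bl ({(z.1, !z.2)} : Finset (Fin n × Bool))
        simp at this ⊢
        omega
      have huniv : Fintype.card (Fin n × Bool) = 2 * n := by simp [mul_comm]
      have : (sᶜ : Finset (Fin n × Bool)).Nonempty := by
        rw [← Finset.card_pos, Finset.card_compl, huniv]
        omega
      obtain ⟨x, hx⟩ := this
      rw [Finset.mem_compl, hs] at hx
      simp only [Finset.mem_insert, Finset.mem_singleton, not_or] at hx
      exact ⟨x, hx.1, hx.2.1, hx.2.2⟩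
    set xb : Fin n × Bool := (x.1, !x.2) with hxb'
    -- the conjugate u = g₀ x w x⁻¹ g₀⁻¹ is in N and its word is the evident concatenation
    set W : List (Fin n × Bool) :=
      g₀.toWord ++ [x] ++ (w.toWord ++ ([xb] ++ FreeGroup.invRev g₀.toWord)) with hW
    have hWchain : W.Chain' NoCancel := by
      have hγchain := chain'_toWord g₀
      have hωchain := chain'_toWord w
      have hinvchain : (FreeGroup.invRev g₀.toWord).Chain' NoCancel := by
        rw [← toWord_inv]; exact chain'_toWord g₀⁻¹
      have hlastγ : g₀.toWord.getLast? = some z := by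
        rw [hγz]; exact List.getLast?_concat
      have hheadinv : (FreeGroup.invRev g₀.toWord).head? = some (z.1, !z.2) := by
        rw [hγz, Stmt16Aux.invRev_append, invRev_singleton]; simp
      have hheadω : w.toWord.head? = some a := List.head?_eq_head hω
      have hlastω : w.toWord.getLast? = some bl := List.getLast?_eq_getLast hω
      rw [hW]; change List.IsChain _ _; rw [List.isChain_append]
      refine ⟨?_, ?_, ?_⟩
      · rw [List.isChain_append]
        refine ⟨hγchain, List.isChain_singleton x, ?_⟩
        intro u hu v hv
        rw [hlastγ] at hu
        simp only [List.head?_cons, Option.mem_some_iff] at hu hv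
        subst hu; subst hv
        exact hxz
      · rw [List.isChain_append]
        refine ⟨hωchain, ?_, ?_⟩
        · rw [List.isChain_append]
          refine ⟨List.isChain_singleton _, hinvchain, ?_⟩
          intro u hu v hv
          rw [hheadinv] at hv
          simp only [List.getLast?_singleton, Option.mem_some_iff] at hu hv
          subst hu; subst hv
          intro hc
          apply hxz
          rw [hxb'] at hc
          rw [Prod.ext_iff] at hc
          simp only [Bool.not_not] at hc
          rw [Prod.ext_iff]
          exact ⟨hc.1.symm, hc.2.symm⟩
        · intro u hu v hv
          rw [hlastω] at hu
          simp only [List.head?_append, List.head?_cons, Option.mem_some_iff,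
            Option.mem_def] at hu hv
          have hu' : u = bl := by
            injection hu with h; exact h.symm
          subst hu'
          have hv' : v = xb := by have := hv; simpa using this.symm
          subst hv'
          intro hc
          apply hxb
          rw [hxb'] at hc
          rw [Prod.ext_iff] at hc ⊢
          simp only [Bool.not_not] at hc
          exact ⟨hc.1, by simpa using hc.2⟩
      · intro u hu v hv
        rw [List.getLast?_concat] at hu
        have hv' : (w.toWord ++ ([xb] ++ FreeGroup.invRev g₀.toWord)).head? = some a := by
          cases hc : w.toWord with
          | nil => exact absurd hc hω
          | cons a' t =>
            rw [hc] at hheadω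
            simp only [List.head?_cons, Option.some.injEq] at hheadω
            simp [hc, hheadω]
        rw [hv'] at hv
        simp only [Option.mem_some_iff] at hu hv
        subst hu; subst hv
        intro hc
        apply hxa
        rw [Prod.ext_iff] at hc ⊢
        exact ⟨hc.1.symm, by rw [hc.2, Bool.not_not]⟩
    have huval : g₀ * FreeGroup.mk [x] * w * (g₀ * FreeGroup.mk [x])⁻¹ = FreeGroup.mk W := by
      have e1 : (FreeGroup.mk [x])⁻¹ = FreeGroup.mk [xb] := by
        rw [FreeGroup.inv_mk, invRev_singleton, hxb']
      have e2 : g₀⁻¹ = FreeGroup.mk (FreeGroup.invRev g₀.toWord) := by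
        conv_lhs => rw [← mk_toWord (x := g₀)]
        rw [FreeGroup.inv_mk]
      rw [mul_inv_rev, e1, e2, hW]
      simp only [← FreeGroup.mul_mk, mk_toWord]
      simp [mul_assoc]
    have huN : g₀ * FreeGroup.mk [x] * w * (g₀ * FreeGroup.mk [x])⁻¹ ∈ N :=
      Subgroup.Normal.conj_mem ‹N.Normal› w hwN (g₀ * FreeGroup.mk [x])
    have huword : (FreeGroup.mk W).toWord = W := by
      rw [toWord_mk, reduce_eq_self_of_chain' hWchain]
    -- apply quasiconvexity to the prefix g₀ ++ [x]
    have humem : FreeGroup.mk W ∈ Subgroup.closure (S : Set (FreeGroup (Fin n))) := by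
      rw [hScl, ← huval]; exact huN
    obtain ⟨h, hh, hlen⟩ := quasiconvex hSle humem (g₀.toWord ++ [x])
      (w.toWord ++ ([xb] ++ FreeGroup.invRev g₀.toWord)) (by rw [huword, hW, List.append_assoc])
    have hhN : h ∈ N := by rw [← hScl]; exact hh
    have hmkp : FreeGroup.mk (g₀.toWord ++ [x]) = g₀ * FreeGroup.mk [x] := by
      rw [← FreeGroup.mul_mk, mk_toWord]
    rw [hmkp] at hlen
    -- the element k = h⁻¹ * g₀ is in the same coset and is short
    have hkcoset : (h⁻¹ * g₀)⁻¹ * g ∈ N := by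
      have h1 : g₀⁻¹ * h * g₀ ∈ N := Subgroup.Normal.conj_mem' ‹N.Normal› h hhN g₀
      have : (h⁻¹ * g₀)⁻¹ * g = (g₀⁻¹ * h * g₀) * (g₀⁻¹ * g) := by group
      rw [this]
      exact mul_mem h1 hg₀
    have hklen : (h⁻¹ * g₀).toWord.length ≤ L + 1 := by
      have : h⁻¹ * g₀ = (h⁻¹ * (g₀ * FreeGroup.mk [x])) * (FreeGroup.mk [x])⁻¹ := by group
      rw [this]
      calc ((h⁻¹ * (g₀ * FreeGroup.mk [x])) * (FreeGroup.mk [x])⁻¹).toWord.length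
          ≤ (h⁻¹ * (g₀ * FreeGroup.mk [x])).toWord.length
            + ((FreeGroup.mk [x])⁻¹).toWord.length := by
            exact FreeGroup.norm_mul_le _ _
        _ ≤ L + 1 := by
            have h2 : ((FreeGroup.mk [x])⁻¹).toWord.length ≤ 1 := by
              rw [toWord_inv, toWord_mk]
              calc (FreeGroup.invRev (FreeGroup.reduce [x])).length
                  = (FreeGroup.reduce [x]).length := FreeGroup.invRev_length
                _ ≤ 1 := by rw [FreeGroup.reduce_singleton]; simp
            have h3 := hlen
            rw [← mul_assoc] at h3
            omega
    exact le_trans (hmin _ hkcoset) hklen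
  -- finitely many cosets
  have hfin : Finite (FreeGroup (Fin n) ⧸ N) := by
    have hfin1 : Finite {l : List (Fin n × Bool) // l.length ≤ L + 1} :=
      (List.finite_length_le (Fin n × Bool) (L + 1)).to_subtype
    have hfin2 : Finite {y : FreeGroup (Fin n) // y.toWord.length ≤ L + 1} := by
      refine Finite.of_injective
        (fun y => (⟨y.1.toWord, y.2⟩ : {l : List (Fin n × Bool) // l.length ≤ L + 1})) ?_
      intro y₁ y₂ h
      exact Subtype.ext (toWord_injective (congrArg Subtype.val h))
    refine Finite.of_surjective
      (fun y : {y : FreeGroup (Fin n) // y.toWord.length ≤ L + 1} =>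
        (QuotientGroup.mk y.1 : FreeGroup (Fin n) ⧸ N)) ?_
    intro c
    induction c using QuotientGroup.induction_on with
    | H g =>
      obtain ⟨k, hk, hklen⟩ := key g
      exact ⟨⟨k, hklen⟩, (QuotientGroup.eq.mpr hk).symm ▸ rfl⟩
  exact Subgroup.index_ne_zero_of_finite hidx
end
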